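/- Let G be a finite group. Then there is a constant m such that for every finite tree (T, ≤) with a valence map φ: T → G, every element v ∈ G which is the value of some linear extension of ≤ is also the value of a linear extension of excursiveness at most m. Here the value of a linear extension listing the nodes as t₁ ≺ ⋯ ≺ tₙ is φ(t₁)⋯φ(tₙ), and the excursiveness is the maximum over all nodes t of the number of maximal contiguous blocks in t₁⋯tₙ consisting of nodes ≥ t. -/

import Mathlib

/-- `blockCount p w` is the number of maximal nonempty blocks of letters
satisfying `p` in the word `w`. -/
def blockCount {X : Type*} (p : X → Bool) (w : List X) : ℕ :=
  ((w.map p).destutter (· ≠ ·)).count true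

/-- A listing of all elements of a finite poset compatible with the order. -/
def IsLinearExtension {T : Type*} [PartialOrder T] (w : List T) : Prop :=
  w.Nodup ∧ (∀ t : T, t ∈ w) ∧ w.Pairwise (fun a b => ¬ b ≤ a)

namespace Excur

/-- number of rises (false→true transitions) given previous letter `b` -/
def rises : Bool → List Bool → ℕ
  | _, [] => 0
  | b, a :: l => (if a && !b then 1 else 0) + rises a l

@[simp] lemma rises_nil (b : Bool) : rises b [] = 0 := rfl

lemma rises_cons (b a : Bool) (l : List Bool) :
    rises b (a :: l) = (if a && !b then 1 else 0) + rises a l := rfl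

@[simp] lemma rises_false_cons (b : Bool) (l : List Bool) :
    rises b (false :: l) = rises false l := by simp [rises_cons]

lemma rises_true_cons (l : List Bool) :
    rises false (true :: l) = 1 + rises true l := by simp [rises_cons]

lemma rises_true_cons_true (l : List Bool) :
    rises true (true :: l) = rises true l := by simp [rises_cons]

lemma count_destutter' (l : List Bool) : ∀ a : Bool,
    ((List.destutter' (· ≠ ·) a l).count true) = (if a then 1 else 0) + rises a l := by
  induction l with
  | nil => intro a; cases a <;> simp [List.destutter', rises]
  | cons b l ih =>
    intro a
    by_cases hab : a = b
    · subst hab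
      simp only [List.destutter']
      rw [if_neg (by simp)]
      rw [ih a]
      cases a <;> simp [rises_cons]
    · simp only [List.destutter']
      rw [if_pos (by simp [hab])]
      rw [List.count_cons, ih b]
      cases a <;> cases b <;> simp_all [rises_cons] <;> omega

lemma blockCount_eq_rises {X : Type*} (p : X → Bool) (w : List X) :
    blockCount p w = rises false (w.map p) := by
  unfold blockCount
  cases hw : w.map p with
  | nil => simp [List.destutter]
  | cons a l =>
    rw [List.destutter_cons', count_destutter' l a]
    cases a <;> simp [rises_cons]

lemma rises_append (b : Bool) (l₁ l₂ : List Bool) :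
    rises b (l₁ ++ l₂) = rises b l₁ + rises (l₁.getLastD b) l₂ := by
  induction l₁ generalizing b with
  | nil => simp
  | cons a l ih =>
    simp only [List.cons_append, rises_cons, ih a]
    rw [List.getLastD_cons]
    omega

lemma rises_true_le (l : List Bool) : rises true l ≤ rises false l := by
  cases l with
  | nil => simp
  | cons a l => cases a <;> simp [rises_cons]

lemma rises_le_false (b : Bool) (l : List Bool) : rises b l ≤ rises false l := by
  cases b
  · exact le_refl _
  · exact rises_true_le l

lemma rises_all_false (b : Bool) (l : List Bool) (h : ∀ a ∈ l, a = false) :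
    rises b l = 0 := by
  induction l generalizing b with
  | nil => rfl
  | cons a l ih =>
    have ha : a = false := h a (by simp)
    subst ha
    simp [ih false (fun a ha => h a (by simp [ha]))]

lemma getLastD_all_false (b : Bool) (l : List Bool) (h : ∀ a ∈ l, a = false) (hne : l ≠ []) :
    l.getLastD b = false := by
  rw [List.getLastD_eq_getLast?, List.getLast?_eq_getLast hne, Option.getD_some]
  exact h _ (List.getLast_mem hne)

lemma rises_all_false_append (b : Bool) (l₁ l₂ : List Bool) (h : ∀ a ∈ l₁, a = false) :
    rises b (l₁ ++ l₂) = rises (if l₁ = [] then b else false) l₂ := by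
  rw [rises_append, rises_all_false b l₁ h]
  by_cases hne : l₁ = []
  · simp [hne]
  · rw [if_neg hne, getLastD_all_false b l₁ h hne]
    simp

lemma rises_head_false (b : Bool) (l : List Bool) (h : l = [] ∨ l.head? = some false) :
    rises b l = rises false l := by
  rcases h with h | h
  · simp [h]
  · cases l with
    | nil => simp
    | cons a l => simp at h; subst h; simp

lemma rises_all_true (l : List Bool) (h : ∀ a ∈ l, a = true) (hne : l ≠ []) :
    rises false l = 1 ∧ rises true l = 0 := by
  induction l with
  | nil => simp at hne
  | cons a l ih =>
    have ha : a = true := h a (by simp)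
    subst ha
    by_cases hl : l = []
    · subst hl; simp [rises_cons]
    · have := ih (fun a ha => h a (by simp [ha])) hl
      constructor
      · rw [rises_true_cons]; omega
      · rw [rises_true_cons_true]; omega

variable {α : Type*}

/-- deleting letters (on which `p''` is false... actually letters outside `Q`,
which are `p''`-false) does not increase the number of rises -/
lemma rises_filter_le (p'' Q : α → Bool) (c : List α)
    (h : ∀ x ∈ c, p'' x = true → Q x = true) :
    ∀ b, rises b ((c.filter Q).map p'') ≤ rises b (c.map p'') := by
  induction c with
  | nil => intro b; simp
  | cons x c ih =>
    intro b
    have ih' := ih (fun y hy => h y (by simp [hy]))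
    by_cases hQ : Q x = true
    · rw [List.filter_cons_of_pos hQ]
      simp only [List.map_cons, rises_cons]
      exact Nat.add_le_add_left (ih' (p'' x)) _
    · have hp : p'' x = false := by
        cases hpx : p'' x
        · rfl
        · exact absurd (h x (by simp) hpx) hQ
      rw [List.filter_cons_of_neg hQ]
      simp only [List.map_cons, hp, rises_false_cons]
      calc rises b ((c.filter Q).map p'') ≤ rises false ((c.filter Q).map p'') :=
            rises_le_false b _
        _ ≤ rises false (c.map p'') := ih' false

/-- Case A: `p''` implies `p`; chunk starts with a `p`-false letter. -/
lemma rises_op_le_of_imp (p p'' : α → Bool) (c : List α)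
    (hhead : ∃ x xs, c = x :: xs ∧ p x = false)
    (hsub : ∀ x ∈ c, p'' x = true → p x = true) (b : Bool) :
    rises b ((c.filter (fun x => !p x) ++ c.filter p).map p'') ≤ rises b (c.map p'') := by
  obtain ⟨x, xs, rfl, hx⟩ := hhead
  rw [List.map_append]
  have hfalse : ∀ a ∈ (((x :: xs).filter (fun x => !p x)).map p''), a = false := by
    intro a ha
    rw [List.mem_map] at ha
    obtain ⟨y, hy, rfl⟩ := ha
    rw [List.mem_filter] at hy
    cases hp'' : p'' y
    · rfl
    · have := hsub y hy.1 hp''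
      simp [this] at hy
  rw [rises_all_false_append b _ _ hfalse]
  have hne : ((x :: xs).filter (fun x => !p x)).map p'' ≠ [] := by
    rw [List.filter_cons_of_pos (by simp [hx])]
    simp
  rw [if_neg hne]
  calc rises false ((((x :: xs)).filter p).map p'')
      ≤ rises false ((x :: xs).map p'') := rises_filter_le p'' p _ hsub false
    _ = rises b ((x :: xs).map p'') := by
        have hx'' : p'' x = false := by
          cases hpx : p'' x
          · rfl
          · rw [hsub x (by simp) hpx] at hx; exact absurd hx (by simp)
        simp [hx'']

/-- Case B: `p''` and `p` are disjoint. -/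
lemma rises_op_le_of_disj (p p'' : α → Bool) (c : List α)
    (hdisj : ∀ x ∈ c, p'' x = true → p x = false) (b : Bool) :
    rises b ((c.filter (fun x => !p x) ++ c.filter p).map p'') ≤ rises b (c.map p'') := by
  rw [List.map_append, rises_append]
  have h2 : rises (((c.filter fun x => !p x).map p'').getLastD b) ((c.filter p).map p'') = 0 := by
    apply rises_all_false
    intro a ha
    rw [List.mem_map] at ha
    obtain ⟨y, hy, rfl⟩ := ha
    rw [List.mem_filter] at hy
    cases hp'' : p'' y
    · rfl
    · rw [hdisj y hy.1 hp''] at hy; simp at hy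
  rw [h2, Nat.add_zero]
  exact rises_filter_le p'' (fun x => !p x) c
    (fun y hy hp'' => by show (!p y) = true; rw [hdisj y hy hp'']; rfl) b

lemma head?_filter_pos (p : α → Bool) (l : List α) (y : α)
    (hy : l.head? = some y) (hpy : p y = true) : (l.filter p).head? = some y := by
  cases l with
  | nil => simp at hy
  | cons a l =>
    simp at hy; subst hy
    rw [List.filter_cons_of_pos hpy]; rfl

lemma getLast?_filter_pos (p : α → Bool) (l : List α) (y : α)
    (hy : l.getLast? = some y) (hpy : p y = true) : (l.filter p).getLast? = some y := by
  rw [← List.head?_reverse, ← List.filter_reverse]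
  exact head?_filter_pos p l.reverse y (by rw [List.head?_reverse]; exact hy) hpy

/-- exit state equality -/
lemma getLastD_op_eq (p p'' : α → Bool) (c : List α) (y : α)
    (hy : c.getLast? = some y) (hpy : p y = true) (b : Bool) :
    ((c.filter (fun x => !p x) ++ c.filter p).map p'').getLastD b = ((c.map p'')).getLastD b := by
  have h1 : (c.filter p).getLast? = some y := getLast?_filter_pos p c y hy hpy
  have hne : (c.filter p).map p'' ≠ [] := by
    intro h
    rw [List.map_eq_nil_iff] at h
    rw [h] at h1; simp at h1
  rw [List.map_append, List.getLastD_eq_getLast?, List.getLast?_append_of_ne_nil _ hne,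
    List.getLastD_eq_getLast?, List.getLast?_map, List.getLast?_map, h1, hy]


/-- concatenation of (separator, run) pairs -/
def flat (prs : List (List α × List α)) : List α :=
  (prs.map fun pr => pr.1 ++ pr.2).flatten

@[simp] lemma flat_nil : flat ([] : List (List α × List α)) = [] := rfl

@[simp] lemma flat_cons (pr : List α × List α) (prs : List (List α × List α)) :
    flat (pr :: prs) = pr.1 ++ pr.2 ++ flat prs := by
  simp [flat]

lemma flat_append (l₁ l₂ : List (List α × List α)) :
    flat (l₁ ++ l₂) = flat l₁ ++ flat l₂ := by
  simp [flat]

lemma dropWhile_head_false (q : α → Bool) : ∀ (l : List α) (y : α) (ys : List α),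
    l.dropWhile q = y :: ys → q y = false := by
  intro l
  induction l with
  | nil => intro y ys h; simp at h
  | cons a l ih =>
    intro y ys h
    by_cases hq : q a = true
    · rw [List.dropWhile_cons_of_pos hq] at h
      exact ih y ys h
    · rw [List.dropWhile_cons_of_neg hq] at h
      cases h
      simpa using hq

/-- run decomposition of a word along a predicate -/
lemma exists_runs (p : α → Bool) : ∀ (n : ℕ) (w : List α), w.length ≤ n →
    ∃ (prs : List (List α × List α)) (slast : List α),
      w = flat prs ++ slast ∧
      (∀ pr ∈ prs, pr.2 ≠ [] ∧ ∀ x ∈ pr.2, p x = true) ∧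
      (∀ pr ∈ prs, ∀ x ∈ pr.1, p x = false) ∧
      (∀ pr ∈ prs, pr.1 = [] → prs.head? = some pr ∧ w.takeWhile (fun x => !p x) = []) ∧
      (∀ pr ∈ prs.drop 1, pr.1 ≠ []) ∧
      (∀ x ∈ slast, p x = false) ∧
      rises false (w.map p) = prs.length := by
  intro n
  induction n with
  | zero =>
    intro w hw
    rw [Nat.le_zero, List.length_eq_zero_iff] at hw
    subst hw
    exact ⟨[], [], by simp, by simp, by simp, by simp, by simp, by simp, by simp⟩
  | succ n ih =>
    intro w hw
    set s : List α := w.takeWhile (fun x => !p x) with hs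
    set w₁ : List α := w.dropWhile (fun x => !p x) with hw₁
    have hws : w = s ++ w₁ := List.takeWhile_append_dropWhile.symm
    have hsf : ∀ x ∈ s, p x = false := by
      intro x hx
      have := List.mem_takeWhile_imp hx
      simpa using this
    cases hw₁' : w₁ with
    | nil =>
      refine ⟨[], s, by simp [hws, hw₁'], by simp, by simp, by simp, by simp, hsf, ?_⟩
      simp only [List.length_nil]
      rw [hws, hw₁']
      exact rises_all_false false _ (by
        intro a ha
        rw [List.mem_map] at ha
        obtain ⟨x, hx, rfl⟩ := ha
        simp at hx
        exact hsf x hx)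
    | cons y ys =>
      have hy : p y = true := by
        have := dropWhile_head_false (fun x => !p x) w y ys (by rw [← hw₁]; exact hw₁')
        simpa using this
      set r : List α := w₁.takeWhile p with hr
      set w₂ : List α := w₁.dropWhile p with hw₂def
      have hw₁r : w₁ = r ++ w₂ := List.takeWhile_append_dropWhile.symm
      have hrne : r ≠ [] := by
        rw [hr, hw₁']
        simp [List.takeWhile, hy]
      have hrt : ∀ x ∈ r, p x = true := fun x hx => List.mem_takeWhile_imp hx
      have hw₂head : ∀ z ∈ w₂.head?, p z = false := by
        intro z hz
        cases hw₂' : w₂ with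
        | nil => rw [hw₂'] at hz; simp at hz
        | cons a as =>
          rw [hw₂'] at hz
          simp at hz
          subst hz
          exact dropWhile_head_false p w₁ a as (by rw [← hw₂def]; exact hw₂')
      have hlen : w₂.length ≤ n := by
        have h1 : w₂.length ≤ w₁.length := by rw [hw₁r]; simp
        have h2 : w₁.length ≤ w.length := by rw [hws]; simp
        have h3 : r.length ≥ 1 := List.length_pos_iff.mpr hrne
        have : w₁.length = r.length + w₂.length := by rw [hw₁r]; simp
        omega
      obtain ⟨prs₂, slast₂, hw₂eq, h2₂, h3₂, h4₂, _, h5₂, h6₂⟩ := ih w₂ hlen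
      have hsw₂ : ∀ pr ∈ prs₂, pr.1 ≠ [] := by
        intro pr hpr h1
        obtain ⟨hhead, htw⟩ := h4₂ pr hpr h1
        cases hw₂' : w₂ with
        | nil =>
          rw [hw₂'] at hw₂eq
          obtain ⟨h2a, _⟩ := h2₂ pr hpr
          obtain ⟨x, hx⟩ := List.exists_mem_of_ne_nil pr.2 h2a
          have hxf : x ∈ flat prs₂ := by
            simp only [flat, List.mem_flatten]
            exact ⟨pr.1 ++ pr.2, List.mem_map_of_mem hpr, by simp [hx]⟩
          have hx0 : x ∈ ([] : List α) := by
            rw [hw₂eq]; exact List.mem_append_left _ hxf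
          simp at hx0
        | cons a as =>
          have hpa : p a = false := hw₂head a (by rw [hw₂']; rfl)
          rw [hw₂'] at htw
          simp [List.takeWhile, hpa] at htw
      refine ⟨(s, r) :: prs₂, slast₂, ?_, ?_, ?_, ?_, by simpa using hsw₂, h5₂, ?_⟩
      · rw [hws, hw₁r, hw₂eq]; simp
      · intro pr hpr
        rcases List.mem_cons.mp hpr with h | h
        · subst h; exact ⟨hrne, hrt⟩
        · exact h2₂ pr h
      · intro pr hpr
        rcases List.mem_cons.mp hpr with h | h
        · subst h; exact hsf
        · exact h3₂ pr h
      · intro pr hpr h1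
        rcases List.mem_cons.mp hpr with h | h
        · subst h
          constructor
          · rfl
          · simpa using h1
        · exact absurd h1 (hsw₂ pr h)
      · -- rises count
        rw [hws, hw₁r, hw₂eq]
        rw [List.map_append, rises_all_false_append false _ _ (by
          intro a ha; rw [List.mem_map] at ha; obtain ⟨x, hx, rfl⟩ := ha; exact hsf x hx)]
        have : (if (s.map p) = [] then false else false) = false := by simp
        rw [this, List.map_append, rises_append]
        have hrt' : ∀ a ∈ r.map p, a = true := by
          intro a ha; rw [List.mem_map] at ha; obtain ⟨x, hx, rfl⟩ := ha; exact hrt x hx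
        have hrise := rises_all_true (r.map p) hrt' (by simpa using hrne)
        have hlast : (r.map p).getLastD false = true := by
          rw [List.getLastD_eq_getLast?, List.getLast?_map]
          cases hg : r.getLast? with
          | none => rw [List.getLast?_eq_none_iff] at hg; exact absurd hg hrne
          | some z =>
            simp only [Option.map_some, Option.getD_some]
            exact hrt z (List.mem_of_getLast? hg)
        rw [hrise.1, hlast]
        have hback : rises true ((flat prs₂ ++ slast₂).map p) =
            rises false ((flat prs₂ ++ slast₂).map p) := by
          apply rises_head_false
          cases hfp : (flat prs₂ ++ slast₂) with
          | nil => left; simp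
          | cons a as =>
            right
            have ha : p a = false := by
              apply hw₂head
              rw [hw₂eq, hfp]; rfl
            simp [ha]
        rw [hback, ← hw₂eq, h6₂]
        simp [Nat.add_comm]

lemma rises_flat (p : α → Bool) (l : List (List α × List α))
    (hs : ∀ pr ∈ l, pr.1 ≠ []) (h2 : ∀ pr ∈ l, pr.2 ≠ [] ∧ ∀ x ∈ pr.2, p x = true)
    (h3 : ∀ pr ∈ l, ∀ x ∈ pr.1, p x = false) :
    ∀ b, rises b ((flat l).map p) = l.length := by
  induction l with
  | nil => intro b; simp
  | cons pr l ih =>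
    intro b
    rw [flat_cons, List.map_append, List.map_append,
      List.append_assoc, rises_all_false_append b _ _ (by
        intro a ha; rw [List.mem_map] at ha; obtain ⟨x, hx, rfl⟩ := ha
        exact h3 pr (by simp) x hx)]
    rw [if_neg (by simpa using hs pr (by simp))]
    rw [rises_append]
    obtain ⟨hne2, ht2⟩ := h2 pr (by simp)
    have hall : ∀ a ∈ pr.2.map p, a = true := by
      intro a ha; rw [List.mem_map] at ha; obtain ⟨x, hx, rfl⟩ := ha; exact ht2 x hx
    rw [(rises_all_true _ hall (by simpa using hne2)).1]
    have hlast : (pr.2.map p).getLastD false = true := by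
      rw [List.getLastD_eq_getLast?, List.getLast?_map,
        List.getLast?_eq_getLast hne2]
      simp only [Option.map_some, Option.getD_some]
      exact ht2 _ (List.getLast_mem hne2)
    rw [hlast, ih (fun q hq => hs q (by simp [hq])) (fun q hq => h2 q (by simp [hq]))
      (fun q hq => h3 q (by simp [hq])) true]
    simp [Nat.add_comm]

lemma filter_flat (p : α → Bool) (l : List (List α × List α))
    (h2 : ∀ pr ∈ l, ∀ x ∈ pr.2, p x = true) (h3 : ∀ pr ∈ l, ∀ x ∈ pr.1, p x = false) :
    (flat l).filter p = (l.map Prod.snd).flatten ∧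
    (flat l).filter (fun x => !p x) = (l.map Prod.fst).flatten := by
  induction l with
  | nil => simp [flat]
  | cons pr l ih =>
    obtain ⟨ih1, ih2⟩ := ih (fun q hq => h2 q (by simp [hq])) (fun q hq => h3 q (by simp [hq]))
    constructor
    · rw [flat_cons, List.filter_append, List.filter_append, ih1,
        List.filter_eq_nil_iff.mpr (by intro a ha hpa; rw [h3 pr (by simp) a ha] at hpa; simp at hpa),
        List.filter_eq_self.mpr (h2 pr (by simp))]
      simp
    · have e1 : pr.2.filter (fun x => !p x) = [] := List.filter_eq_nil_iff.mpr
        (by intro a ha hpa; rw [h2 pr (by simp) a ha] at hpa; simp at hpa)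
      have e2 : pr.1.filter (fun x => !p x) = pr.1 := List.filter_eq_self.mpr
        (by intro a ha; rw [h3 pr (by simp) a ha]; rfl)
      rw [flat_cons, List.filter_append, List.filter_append, ih2, e1, e2]
      simp

lemma flat_getLast (l : List (List α × List α)) (hne : l ≠ [])
    (h2 : ∀ pr ∈ l, pr.2 ≠ []) :
    ∃ y, (flat l).getLast? = some y ∧ ∃ pr ∈ l, y ∈ pr.2 := by
  obtain ⟨L, pk, rfl⟩ := (List.eq_nil_or_concat l).resolve_left hne
  rw [List.concat_eq_append, flat_append, flat_cons, flat_nil, List.append_nil]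
  have hpk2 : pk.2 ≠ [] := h2 pk (by simp)
  refine ⟨pk.2.getLast hpk2, ?_, pk, by simp, List.getLast_mem hpk2⟩
  rw [List.getLast?_append_of_ne_nil _ (by simp [hpk2]),
    List.getLast?_append_of_ne_nil _ hpk2, List.getLast?_eq_getLast hpk2]

section Op

variable {T : Type} [PartialOrder T] [DecidableRel ((· ≤ ·) : T → T → Prop)]
variable {G : Type*} [Group G] [Fintype G]

lemma op_lemma (hchain : ∀ x : T, IsChain (· ≤ ·) {y : T | y ≤ x}) (φ : T → G) (t : T)
    (w : List T) (hpw : w.Pairwise (fun a b => ¬ b ≤ a))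
    (hB : 2 * (Fintype.card G)^3 + 2 < blockCount (fun u => decide (t ≤ u)) w) :
    ∃ w' : List T, w'.Perm w ∧ w'.Pairwise (fun a b => ¬ b ≤ a) ∧
      (w'.map φ).prod = (w.map φ).prod ∧
      blockCount (fun u => decide (t ≤ u)) w' < blockCount (fun u => decide (t ≤ u)) w ∧
      ∀ t'' : T, ¬ (t'' < t) →
        blockCount (fun u => decide (t'' ≤ u)) w' ≤ blockCount (fun u => decide (t'' ≤ u)) w := by
  classical
  set n := Fintype.card G with hn
  set p : T → Bool := fun u => decide (t ≤ u) with hp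
  obtain ⟨prs, slast, hweq, h2, h3, _, h4, h5, h6⟩ :=
    exists_runs p w.length w (le_refl _)
  rw [blockCount_eq_rises (p := p)] at hB
  rw [h6] at hB
  -- pigeonhole for triples of prefix products at odd run-boundaries
  set f : ℕ → G × G × G := fun k =>
    (((((prs.take k).map Prod.fst).flatten).map φ).prod,
     ((((prs.take k).map Prod.snd).flatten).map φ).prod,
     ((flat (prs.take k)).map φ).prod) with hf
  have hcard : Fintype.card (G × G × G) = n ^ 3 := by
    rw [Fintype.card_prod, Fintype.card_prod, ← hn]; ring
  obtain ⟨i, hi, j, hj, hij, hfij⟩ :=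
    Finset.exists_ne_map_eq_of_card_lt_of_maps_to (s := (Finset.range (n^3+1)).image (fun a => 2*a+1))
      (t := (Finset.univ : Finset (G × G × G)))
      (by
        rw [Finset.card_image_of_injective _ (fun a b h => by omega), Finset.card_range,
          Finset.card_univ, hcard]
        omega)
      (f := f) (fun a _ => Finset.mem_univ _)
  -- normalize i < j
  wlog hlt : i < j generalizing i j
  · exact this j hj i hi (Ne.symm hij) hfij.symm (by omega)
  obtain ⟨a, ha, rfl⟩ := Finset.mem_image.mp hi
  obtain ⟨b, hb, rfl⟩ := Finset.mem_image.mp hj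
  rw [Finset.mem_range] at ha hb
  set i := 2*a+1 with hidef
  set j := 2*b+1 with hjdef
  have hi1 : 1 ≤ i := by omega
  have hji2 : i + 2 ≤ j := by omega
  have hjlen : j ≤ prs.length := by omega
  -- the chunk
  set pre := prs.take i with hpre
  set mid := (prs.drop i).take (j - i) with hmid
  set post := prs.drop j with hpost
  have hsplit1 : prs.take j = pre ++ mid := by
    have : j = i + (j - i) := by omega
    rw [this, List.take_add]
  have hsplit : prs = pre ++ mid ++ post := by
    rw [List.append_assoc]
    have h1 : prs.drop i = mid ++ post := by
      rw [hmid, hpost]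
      have : (prs.drop i).drop (j - i) = prs.drop j := by
        rw [List.drop_drop]
        congr 1
        omega
      rw [← this, List.take_append_drop]
    rw [← h1, List.take_append_drop]
  have hmidlen : mid.length = j - i := by
    rw [hmid, List.length_take, List.length_drop]
    omega
  have hmidsub : ∀ pr ∈ mid, pr ∈ prs := by
    intro pr hpr
    exact List.drop_subset i prs (List.take_subset _ _ hpr)
  have hmids : ∀ pr ∈ mid, pr.1 ≠ [] := by
    intro pr hpr
    apply h4
    have h1 : pr ∈ prs.drop i := List.take_subset _ _ hpr
    have h2' : prs.drop i = (prs.drop 1).drop (i-1) := by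
      rw [List.drop_drop]
      congr 1
      omega
    rw [h2'] at h1
    exact List.drop_subset _ _ h1
  have hmidne : mid ≠ [] := by
    intro h
    rw [h] at hmidlen
    simp at hmidlen
    omega
  set u := flat pre with hu
  set c := flat mid with hc
  set v := flat post ++ slast with hv
  have hwdecomp : w = u ++ (c ++ v) := by
    rw [hweq, hsplit, flat_append, flat_append]
    simp [hu, hc, hv]
  -- chunk head
  obtain ⟨pr0, mid', hmideq⟩ := List.exists_cons_of_ne_nil hmidne
  have hpr0mem : pr0 ∈ mid := by rw [hmideq]; simp
  obtain ⟨x0, s0', hx0eq⟩ := List.exists_cons_of_ne_nil (hmids pr0 hpr0mem)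
  have hcheadeq : c = x0 :: (s0' ++ pr0.2 ++ flat mid') := by
    rw [hc, hmideq, flat_cons, hx0eq]
    simp
  have hx0p : p x0 = false := by
    apply h3 pr0 (hmidsub pr0 hpr0mem)
    rw [hx0eq]; simp
  have hchead : ∃ x xs, c = x :: xs ∧ p x = false := ⟨x0, _, hcheadeq, hx0p⟩
  -- chunk last
  obtain ⟨y, hylast, pry, hprymem, hymem⟩ := flat_getLast mid hmidne
    (fun pr hpr => (h2 pr (hmidsub pr hpr)).1)
  have hyp : p y = true := (h2 pry (hmidsub pry hprymem)).2 y hymem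
  -- the new chunk and word
  set c2 := c.filter (fun x => !p x) ++ c.filter p with hc2
  set w' := u ++ (c2 ++ v) with hw'
  have hperm : c2.Perm c := by
    have := List.filter_append_perm (fun x => !p x) c
    refine List.Perm.trans ?_ this
    apply List.Perm.append_left
    apply List.Perm.of_eq
    congr 1
    funext x
    simp
  have hwperm : w'.Perm w := by
    rw [hw', hwdecomp]
    exact List.Perm.append_left u (List.Perm.append_right v hperm)
  -- filter computations
  obtain ⟨hfilt1, hfilt2⟩ := filter_flat p mid
    (fun pr hpr => (h2 pr (hmidsub pr hpr)).2) (fun pr hpr => h3 pr (hmidsub pr hpr))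
  -- products of the chunk are trivial
  have htake : ((prs.take j).map Prod.fst).flatten = ((pre.map Prod.fst).flatten) ++ ((mid.map Prod.fst).flatten) ∧
      ((prs.take j).map Prod.snd).flatten = ((pre.map Prod.snd).flatten) ++ ((mid.map Prod.snd).flatten) ∧
      flat (prs.take j) = flat pre ++ flat mid := by
    rw [hsplit1]
    refine ⟨?_, ?_, ?_⟩ <;> simp [flat]
  have hfi : f i = f j := hfij
  have hprod1 : (((mid.map Prod.fst).flatten).map φ).prod = 1 := by
    have h1 := congrArg (fun z : G × G × G => z.1) hfi
    simp only [hf] at h1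
    rw [htake.1, List.map_append, List.prod_append, ← hpre] at h1
    exact left_eq_mul.mp h1
  have hprod2 : (((mid.map Prod.snd).flatten).map φ).prod = 1 := by
    have h1 := congrArg (fun z : G × G × G => z.2.1) hfi
    simp only [hf] at h1
    rw [htake.2.1, List.map_append, List.prod_append, ← hpre] at h1
    exact left_eq_mul.mp h1
  have hprod3 : ((c.map φ)).prod = 1 := by
    have h1 := congrArg (fun z : G × G × G => z.2.2) hfi
    simp only [hf] at h1
    rw [htake.2.2, List.map_append, List.prod_append, ← hpre] at h1
    rw [hc]
    exact left_eq_mul.mp h1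
  have hprodc2 : (c2.map φ).prod = 1 := by
    rw [hc2, List.map_append, List.prod_append, hfilt1, hfilt2, hprod1, hprod2, one_mul]
  have hprodeq : (w'.map φ).prod = (w.map φ).prod := by
    rw [hw', hwdecomp]
    simp only [List.map_append, List.prod_append]
    rw [hprodc2, hprod3]
  -- pairwise
  have hpw' : w'.Pairwise (fun a b => ¬ b ≤ a) := by
    rw [hwdecomp, List.pairwise_append] at hpw
    obtain ⟨hu1, hcv, hucv⟩ := hpw
    rw [List.pairwise_append] at hcv
    obtain ⟨hc1, hv1, hcv1⟩ := hcv
    rw [hw', List.pairwise_append]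
    refine ⟨hu1, ?_, ?_⟩
    · rw [List.pairwise_append]
      refine ⟨?_, hv1, ?_⟩
      · rw [hc2, List.pairwise_append]
        refine ⟨hc1.sublist (List.filter_sublist), hc1.sublist (List.filter_sublist), ?_⟩
        intro x hx z hz hzx
        rw [List.mem_filter] at hx hz
        have htz : t ≤ z := by
          have := hz.2
          rw [hp] at this
          simpa using this
        have htx : p x = true := by
          rw [hp]
          simpa using le_trans htz hzx
        rw [htx] at hx
        simp at hx
      · intro x hx z hz
        exact hcv1 x (hperm.subset hx) z hz
    · intro x hx z hz
      rcases List.mem_append.mp hz with h | h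
      · exact hucv x hx z (List.mem_append.mpr (Or.inl (hperm.subset h)))
      · exact hucv x hx z (List.mem_append.mpr (Or.inr h))
  -- rises decomposition
  have hdecomp : ∀ (q : T → Bool) (d : List T),
      rises false ((u ++ (d ++ v)).map q) =
        rises false (u.map q) + (rises ((u.map q).getLastD false) (d.map q) +
          rises ((d.map q).getLastD ((u.map q).getLastD false)) (v.map q)) := by
    intro q d
    rw [List.map_append, rises_append, List.map_append, rises_append]
  -- exit state equality, for arbitrary predicate
  have hexit : ∀ (q : T → Bool) (b : Bool),
      ((c2.map q).getLastD b) = ((c.map q).getLastD b) := by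
    intro q b
    exact getLastD_op_eq p q c y hylast hyp b
  have hfiltne : c.filter (fun x => !p x) ≠ [] := by
    rw [hcheadeq, List.filter_cons_of_pos (by simp [hx0p])]
    simp
  have hfiltpne : c.filter p ≠ [] := by
    intro h
    have := getLast?_filter_pos p c y hylast hyp
    rw [h] at this
    simp at this
  -- strict decrease for t itself
  have hmain : blockCount p w' < blockCount p w := by
    rw [blockCount_eq_rises, blockCount_eq_rises, hwdecomp, hw', hdecomp, hdecomp,
      hexit p]
    have hnew : rises ((u.map p).getLastD false) (c2.map p) = 1 := by
      rw [hc2, List.map_append, rises_all_false_append _ _ _ (by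
        intro a ha
        rw [List.mem_map] at ha
        obtain ⟨z, hz, rfl⟩ := ha
        rw [List.mem_filter] at hz
        simpa using hz.2)]
      rw [if_neg (by simpa using hfiltne)]
      refine (rises_all_true _ ?_ (by simpa using hfiltpne)).1
      intro a ha
      rw [List.mem_map] at ha
      obtain ⟨z, hz, rfl⟩ := ha
      rw [List.mem_filter] at hz
      exact hz.2
    have hold : rises ((u.map p).getLastD false) (c.map p) = j - i := by
      rw [hc, rises_flat p mid hmids (fun pr hpr => h2 pr (hmidsub pr hpr))
        (fun pr hpr => h3 pr (hmidsub pr hpr)), hmidlen]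
    rw [hnew, hold]
    have : 2 ≤ j - i := by omega
    omega
  refine ⟨w', hwperm, hpw', hprodeq, hmain, ?_⟩
  -- other nodes
  intro t'' hnotlt
  set q : T → Bool := fun u => decide (t'' ≤ u) with hq
  rw [blockCount_eq_rises, blockCount_eq_rises, hwdecomp, hw', hdecomp, hdecomp, hexit q]
  have hkey : ∀ b, rises b (c2.map q) ≤ rises b (c.map q) := by
    by_cases hle : t ≤ t''
    · intro b
      apply rises_op_le_of_imp p q c hchead
      intro z hz hqz
      rw [hq] at hqz
      rw [hp]
      simp only [decide_eq_true_eq] at hqz ⊢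
      exact le_trans hle hqz
    · intro b
      apply rises_op_le_of_disj p q c
      intro z hz hqz
      rw [hq] at hqz
      simp only [decide_eq_true_eq] at hqz
      rw [hp]
      simp only [decide_eq_false_iff_not]
      intro htz
      have hch : t ≤ t'' ∨ t'' ≤ t := by
        by_cases he : t = t''
        · exact Or.inl (le_of_eq he)
        · exact hchain z (by simpa using htz) (by simpa using hqz) he
      rcases hch with h | h
      · exact hle h
      · exact hnotlt (lt_of_le_of_ne h (fun hh => hle (le_of_eq hh.symm)))
  have h1 := hkey ((u.map q).getLastD false)
  omega

end Op

section Main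

variable {T : Type} [PartialOrder T] [DecidableRel ((· ≤ ·) : T → T → Prop)]
variable {G : Type*} [Group G] [Fintype G]

lemma main_step (hchain : ∀ x : T, IsChain (· ≤ ·) {y : T | y ≤ x}) (φ : T → G) (t : T) :
    ∀ (N : ℕ) (w : List T), blockCount (fun u => decide (t ≤ u)) w ≤ N →
    w.Pairwise (fun a b => ¬ b ≤ a) →
    ∃ w' : List T, w'.Perm w ∧ w'.Pairwise (fun a b => ¬ b ≤ a) ∧
      (w'.map φ).prod = (w.map φ).prod ∧
      blockCount (fun u => decide (t ≤ u)) w' ≤ 2 * (Fintype.card G)^3 + 2 ∧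
      ∀ t'' : T, ¬ (t'' < t) →
        blockCount (fun u => decide (t'' ≤ u)) w' ≤ blockCount (fun u => decide (t'' ≤ u)) w := by
  intro N
  induction N with
  | zero =>
    intro w hbc hpw
    exact ⟨w, List.Perm.refl w, hpw, rfl, by omega, fun _ _ => le_refl _⟩
  | succ N ih =>
    intro w hbc hpw
    by_cases hle : blockCount (fun u => decide (t ≤ u)) w ≤ 2 * (Fintype.card G)^3 + 2
    · exact ⟨w, List.Perm.refl w, hpw, rfl, hle, fun _ _ => le_refl _⟩
    · obtain ⟨w₁, hp1, hpw1, hprod1, hlt1, hother1⟩ :=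
        op_lemma hchain φ t w hpw (by omega)
      obtain ⟨w', hp2, hpw2, hprod2, hle2, hother2⟩ := ih w₁ (by omega) hpw1
      refine ⟨w', hp2.trans hp1, hpw2, hprod2.trans hprod1, hle2, ?_⟩
      intro t'' h
      exact le_trans (hother2 t'' h) (hother1 t'' h)

lemma global_step (hchain : ∀ x : T, IsChain (· ≤ ·) {y : T | y ≤ x}) (φ : T → G) :
    ∀ (N : ℕ) (R : Finset T), R.card ≤ N →
    (∀ a b : T, a ≤ b → b ∈ R → a ∈ R) →
    ∀ w : List T, w.Pairwise (fun a b => ¬ b ≤ a) →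
    (∀ s : T, s ∉ R → blockCount (fun u => decide (s ≤ u)) w ≤ 2 * (Fintype.card G)^3 + 2) →
    ∃ w' : List T, w'.Perm w ∧ w'.Pairwise (fun a b => ¬ b ≤ a) ∧
      (w'.map φ).prod = (w.map φ).prod ∧
      ∀ s : T, blockCount (fun u => decide (s ≤ u)) w' ≤ 2 * (Fintype.card G)^3 + 2 := by
  classical
  intro N
  induction N with
  | zero =>
    intro R hcard _ w hpw hgood
    refine ⟨w, List.Perm.refl w, hpw, rfl, fun s => hgood s ?_⟩
    have : R = ∅ := Finset.card_eq_zero.mp (by omega)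
    simp [this]
  | succ N ih =>
    intro R hcard hlow w hpw hgood
    rcases Finset.eq_empty_or_nonempty R with hR | hR
    · exact ⟨w, List.Perm.refl w, hpw, rfl, fun s => hgood s (by simp [hR])⟩
    · obtain ⟨t, htR, htmax'⟩ := Finset.exists_maximal hR
      have htmax : ∀ b ∈ R, ¬ t < b := fun b hb hlt => lt_irrefl t (lt_of_lt_of_le hlt (htmax' hb hlt.le))
      obtain ⟨w₁, hp1, hpw1, hprod1, hle1, hother1⟩ :=
        main_step hchain φ t (blockCount (fun u => decide (t ≤ u)) w) w (le_refl _) hpw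
      set R' := R.erase t with hR'
      have hcard' : R'.card ≤ N := by
        rw [hR', Finset.card_erase_of_mem htR]
        omega
      have hlow' : ∀ a b : T, a ≤ b → b ∈ R' → a ∈ R' := by
        intro a b hab hbR'
        rw [hR', Finset.mem_erase] at hbR' ⊢
        refine ⟨?_, hlow a b hab hbR'.2⟩
        rintro rfl
        exact htmax b hbR'.2 (lt_of_le_of_ne hab (Ne.symm hbR'.1))
      have hgood' : ∀ s : T, s ∉ R' → blockCount (fun u => decide (s ≤ u)) w₁ ≤
          2 * (Fintype.card G)^3 + 2 := by
        intro s hs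
        rw [hR', Finset.mem_erase] at hs
        push_neg at hs
        by_cases hst : s = t
        · subst hst; exact hle1
        · have hsR : s ∉ R := hs hst
          have hnlt : ¬ (s < t) := by
            intro hlt
            exact hsR (hlow s t (le_of_lt hlt) htR)
          exact le_trans (hother1 s hnlt) (hgood s hsR)
      obtain ⟨w', hp2, hpw2, hprod2, hfin⟩ := ih R' hcard' hlow' w₁ hpw1 hgood'
      exact ⟨w', hp2.trans hp1, hpw2, hprod2.trans hprod1, hfin⟩

end Main

end Excur

/-- For each finite group `G` there is a constant `m` such that for every
finite tree `(T, ≤)` (a finite poset with a least element whose principal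
down-sets are chains) with valence map `φ : T → G`, every value attained by
some linear extension is attained by one of excursiveness at most `m`. -/
theorem stmt_15 (G : Type*) [Group G] [Fintype G] :
    ∃ m : ℕ, ∀ (T : Type) [Fintype T] [PartialOrder T]
      [DecidableRel (α := T) (· ≤ ·)],
      (∃ r : T, ∀ t : T, r ≤ t) →
      (∀ t : T, IsChain (· ≤ ·) {t' : T | t' ≤ t}) →
      ∀ (φ : T → G) (v : G),
        (∃ w : List T, IsLinearExtension w ∧ (w.map φ).prod = v) →
        ∃ w : List T, IsLinearExtension w ∧ (w.map φ).prod = v ∧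
          ∀ t : T, blockCount (fun u => decide (t ≤ u)) w ≤ m := by
  refine ⟨2 * (Fintype.card G)^3 + 2, ?_⟩
  intro T _ _ _ _ hchain φ v ⟨w, ⟨hnd, hmem, hpw⟩, hprod⟩
  obtain ⟨w', hperm, hpw', hprodeq, hgood⟩ :=
    Excur.global_step hchain φ (Finset.univ : Finset T).card Finset.univ (le_refl _)
      (fun a b _ _ => Finset.mem_univ a) w hpw
      (fun s hs => absurd (Finset.mem_univ s) hs)
  refine ⟨w', ⟨hperm.nodup_iff.mpr hnd, fun t => hperm.mem_iff.mpr (hmem t), hpw'⟩,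
    hprodeq.trans hprod, hgood⟩
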